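/- TVD property of the Kurganov–Tadmor interface scheme. Let N ≥ 3, Δx > 0, θ ∈ [1,2], let f : ℝ → ℝ be continuously differentiable, fix an interface index I ∈ ZMod N, and let v : ℝ → (ZMod N → ℝ) be differentiable in t. Define slopes (v_x)_j(t) = minmod(θ(v_j − v_{j−1})/Δx, (v_{j+1} − v_{j−1})/(2Δx), θ(v_{j+1} − v_j)/Δx) for j ≠ I and (v_x)_I(t) = 0, where minmod(x₁,…,xₙ) equals max(x₁,…,xₙ) if xⱼ < 0 for all j, min(x₁,…,xₙ) if xⱼ > 0 for all j, and 0 otherwise. Define the reconstructed interface values v⁺_{j+1/2} = v_{j+1} − (Δx/2)(v_x)_{j+1} and v⁻_{j+1/2} = v_j + (Δx/2)(v_x)_j, and let a : ℝ → (ZMod N → ℝ) be continuous with a_j(t) ≥ |f′(ξ)| for every ξ between min(v⁻_{j+1/2}, v⁺_{j+1/2}) and max(v⁻_{j+1/2}, v⁺_{j+1/2}). Suppose v solves the semi-discrete Kurganov–Tadmor scheme d(v_j)/dt = −(H_{j+1/2} − H_{j−1/2})/Δx with H_{j+1/2} = (f(v⁺_{j+1/2}) + f(v⁻_{j+1/2}))/2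 − (a_j/2)·(v⁺_{j+1/2} − v⁻_{j+1/2}) for every j ∈ ZMod N. Then the total variation TV(v(t)) = Σ_{j ∈ ZMod N} |v_{j+1}(t) − v_j(t)| is a nonincreasing function of t. -/

import Mathlib

/-- minmod of a (nonempty) finite list of reals: the maximum if all entries are
negative, the minimum if all entries are positive, and zero otherwise. -/
noncomputable def minmod (l : List ℝ) : ℝ :=
  if ∀ x ∈ l, x < 0 then l.foldr max l.headI
  else if ∀ x ∈ l, x > 0 then l.foldr min l.headI
  else 0

/-- The interface slopes: minmod limiter at every grid point except the interface
point `I`, where the ktSlope is set to zero. -/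
noncomputable def ktSlope (N : ℕ) [NeZero N] (Δx θ : ℝ) (I : ZMod N)
    (v : ZMod N → ℝ) (j : ZMod N) : ℝ :=
  if j = I then 0
  else
    minmod [θ * (v j - v (j - 1)) / Δx,
      (v (j + 1) - v (j - 1)) / (2 * Δx),
      θ * (v (j + 1) - v j) / Δx]

/-- Reconstructed value `v⁺_{j+1/2} = v_{j+1} − (Δx/2)(v_x)_{j+1}`. -/
noncomputable def vplus (N : ℕ) [NeZero N] (Δx θ : ℝ) (I : ZMod N)
    (v : ZMod N → ℝ) (j : ZMod N) : ℝ :=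
  v (j + 1) - (Δx / 2) * ktSlope N Δx θ I v (j + 1)

/-- Reconstructed value `v⁻_{j+1/2} = v_j + (Δx/2)(v_x)_j`. -/
noncomputable def vminus (N : ℕ) [NeZero N] (Δx θ : ℝ) (I : ZMod N)
    (v : ZMod N → ℝ) (j : ZMod N) : ℝ :=
  v j + (Δx / 2) * ktSlope N Δx θ I v j

/-- The Kurganov–Tadmor numerical flux
`H_{j+1/2} = (f(v⁺_{j+1/2}) + f(v⁻_{j+1/2}))/2 − (a_j/2)(v⁺_{j+1/2} − v⁻_{j+1/2})`. -/
noncomputable def Hflux (N : ℕ) [NeZero N] (Δx θ : ℝ) (I : ZMod N)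
    (f : ℝ → ℝ) (a v : ZMod N → ℝ) (j : ZMod N) : ℝ :=
  (f (vplus N Δx θ I v j) + f (vminus N Δx θ I v j)) / 2 -
    (a j / 2) * (vplus N Δx θ I v j - vminus N Δx θ I v j)

open Real Set

lemma minmod3_right (x y z : ℝ) : ∃ s, 0 ≤ s ∧ s ≤ 1 ∧ minmod [x, y, z] = s * z := by
  unfold minmod
  by_cases h1 : ∀ w ∈ [x, y, z], w < 0
  · rw [if_pos h1]
    have hx : x < 0 := h1 x (by simp)
    have hy : y < 0 := h1 y (by simp)
    have hz : z < 0 := h1 z (by simp)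
    have hm1 : List.foldr max (List.headI [x, y, z]) [x, y, z] = max x (max y (max z x)) := by
      simp [List.foldr]
    rw [hm1]
    set m := max x (max y (max z x)) with hm
    have hmz : z ≤ m := le_trans (le_max_left z x) (le_trans (le_max_right y _) (le_max_right x _))
    have hmneg : m ≤ 0 := by
      apply max_le hx.le (max_le hy.le (max_le hz.le hx.le))
    have hz' : z ≠ 0 := ne_of_lt hz
    refine ⟨m / z, div_nonneg_of_nonpos hmneg hz.le, ?_, (div_mul_cancel₀ m hz').symm⟩
    rw [div_le_one_of_neg hz]
    exact hmz
  · rw [if_neg h1]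
    by_cases h2 : ∀ w ∈ [x, y, z], w > 0
    · rw [if_pos h2]
      have hz : z > 0 := h2 z (by simp)
      have hm1 : List.foldr min (List.headI [x, y, z]) [x, y, z] = min x (min y (min z x)) := by
        simp [List.foldr]
      rw [hm1]
      set m := min x (min y (min z x)) with hm
      have hmz : m ≤ z := le_trans (min_le_right x _) (le_trans (min_le_right y _) (min_le_left z x))
      have hmpos : 0 ≤ m := le_min (h2 x (by simp)).le (le_min (h2 y (by simp)).le (le_min hz.le (h2 x (by simp)).le))
      refine ⟨m / z, div_nonneg hmpos hz.le, (div_le_one hz).mpr hmz, (div_mul_cancel₀ m (ne_of_gt hz)).symm⟩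
    · rw [if_neg h2]
      exact ⟨0, le_rfl, zero_le_one, by ring⟩

lemma minmod3_left (x y z : ℝ) : ∃ s, 0 ≤ s ∧ s ≤ 1 ∧ minmod [x, y, z] = s * x := by
  unfold minmod
  by_cases h1 : ∀ w ∈ [x, y, z], w < 0
  · rw [if_pos h1]
    have hx : x < 0 := h1 x (by simp)
    have hm1 : List.foldr max (List.headI [x, y, z]) [x, y, z] = max x (max y (max z x)) := by
      simp [List.foldr]
    rw [hm1]
    set m := max x (max y (max z x)) with hm
    have hmx : x ≤ m := le_max_left _ _
    have hmneg : m ≤ 0 := max_le hx.le (max_le (h1 y (by simp)).le (max_le (h1 z (by simp)).le hx.le))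
    refine ⟨m / x, div_nonneg_of_nonpos hmneg hx.le, ?_, (div_mul_cancel₀ m (ne_of_lt hx)).symm⟩
    rw [div_le_one_of_neg hx]
    exact hmx
  · rw [if_neg h1]
    by_cases h2 : ∀ w ∈ [x, y, z], w > 0
    · rw [if_pos h2]
      have hx : x > 0 := h2 x (by simp)
      have hm1 : List.foldr min (List.headI [x, y, z]) [x, y, z] = min x (min y (min z x)) := by
        simp [List.foldr]
      rw [hm1]
      set m := min x (min y (min z x)) with hm
      have hmx : m ≤ x := min_le_left _ _
      have hmpos : 0 ≤ m := le_min hx.le (le_min (h2 y (by simp)).le (le_min (h2 z (by simp)).le hx.le))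
      exact ⟨m / x, div_nonneg hmpos hx.le, (div_le_one hx).mpr hmx, (div_mul_cancel₀ m (ne_of_gt hx)).symm⟩
    · rw [if_neg h2]
      exact ⟨0, le_rfl, zero_le_one, by ring⟩

lemma slope_rep {N : ℕ} [NeZero N] (Δx θ : ℝ) (hΔx : 0 < Δx) (hθ1 : 1 ≤ θ) (hθ2 : θ ≤ 2)
    (I : ZMod N) (v : ZMod N → ℝ) (j : ZMod N) :
    ∃ α γ : ℝ, 0 ≤ α ∧ α ≤ 1 ∧ 0 ≤ γ ∧ γ ≤ 1 ∧
      Δx / 2 * ktSlope N Δx θ I v j = α * (v (j + 1) - v j) ∧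
      Δx / 2 * ktSlope N Δx θ I v j = γ * (v j - v (j - 1)) := by
  have hθ0 : 0 ≤ θ := by linarith
  by_cases hI : j = I
  · exact ⟨0, 0, le_rfl, zero_le_one, le_rfl, zero_le_one, by simp [ktSlope, hI],
      by simp [ktSlope, hI]⟩
  · unfold ktSlope
    rw [if_neg hI]
    obtain ⟨s, hs0, hs1, hseq⟩ := minmod3_right (θ * (v j - v (j - 1)) / Δx)
      ((v (j + 1) - v (j - 1)) / (2 * Δx)) (θ * (v (j + 1) - v j) / Δx)
    obtain ⟨r, hr0, hr1, hreq⟩ := minmod3_left (θ * (v j - v (j - 1)) / Δx)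
      ((v (j + 1) - v (j - 1)) / (2 * Δx)) (θ * (v (j + 1) - v j) / Δx)
    refine ⟨s * θ / 2, r * θ / 2, by positivity, ?_, by positivity, ?_, ?_, ?_⟩
    · nlinarith
    · nlinarith
    · rw [hseq]; field_simp
    · rw [hreq]; field_simp

lemma mvt_abs (f : ℝ → ℝ) (hf : ContDiff ℝ 1 f) (a b : ℝ) :
    ∃ c, min a b ≤ c ∧ c ≤ max a b ∧ f b - f a = deriv f c * (b - a) := by
  have hdiff : Differentiable ℝ f := hf.differentiable one_ne_zero
  rcases lt_trichotomy a b with h | h | h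
  · obtain ⟨c, hc, hc2⟩ := exists_deriv_eq_slope f h hdiff.continuous.continuousOn
      hdiff.differentiableOn
    refine ⟨c, by rw [min_eq_left h.le]; exact hc.1.le,
      by rw [max_eq_right h.le]; exact hc.2.le, ?_⟩
    rw [hc2]; field_simp [sub_ne_zero.mpr (ne_of_gt h)]
  · exact ⟨a, by simp [h], by simp [h], by rw [h]; ring⟩
  · obtain ⟨c, hc, hc2⟩ := exists_deriv_eq_slope f h hdiff.continuous.continuousOn
      hdiff.differentiableOn
    refine ⟨c, by rw [min_eq_right h.le]; exact hc.1.le,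
      by rw [max_eq_left h.le]; exact hc.2.le, ?_⟩
    rw [hc2]
    have hba : b - a ≠ 0 := sub_ne_zero.mpr (ne_of_lt h)
    have hab : a - b ≠ 0 := sub_ne_zero.mpr (ne_of_gt h)
    field_simp
    ring

lemma phi_ineq (δ x y : ℝ) (hδ : 0 < δ) :
    x * (y / Real.sqrt (y ^ 2 + δ ^ 2)) - x * (x / Real.sqrt (x ^ 2 + δ ^ 2)) ≤ δ := by
  have hsx : 0 < Real.sqrt (x ^ 2 + δ ^ 2) := Real.sqrt_pos.2 (by positivity)
  have hsy : 0 < Real.sqrt (y ^ 2 + δ ^ 2) := Real.sqrt_pos.2 (by positivity)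
  have hylt : |y| ≤ Real.sqrt (y ^ 2 + δ ^ 2) := by
    rw [← Real.sqrt_sq_eq_abs]
    exact Real.sqrt_le_sqrt (by nlinarith)
  have hxle : |x| ≤ Real.sqrt (x ^ 2 + δ ^ 2) := by
    rw [← Real.sqrt_sq_eq_abs]
    exact Real.sqrt_le_sqrt (by nlinarith)
  have hxub : Real.sqrt (x ^ 2 + δ ^ 2) ≤ |x| + δ := by
    rw [show x ^ 2 + δ ^ 2 = x^2 + δ^2 from rfl]
    have : Real.sqrt (x ^ 2 + δ ^ 2) ≤ Real.sqrt ((|x| + δ) ^ 2) :=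
      Real.sqrt_le_sqrt (by nlinarith [abs_nonneg x, sq_abs x])
    rwa [Real.sqrt_sq (by positivity)] at this
  have h1 : x * (y / Real.sqrt (y ^ 2 + δ ^ 2)) ≤ |x| := by
    calc x * (y / Real.sqrt (y ^ 2 + δ ^ 2)) ≤ |x * (y / Real.sqrt (y ^ 2 + δ ^ 2))| :=
        le_abs_self _
      _ = |x| * (|y| / Real.sqrt (y ^ 2 + δ ^ 2)) := by
          rw [abs_mul, abs_div, abs_of_pos hsy]
      _ ≤ |x| * 1 := by
          apply mul_le_mul_of_nonneg_left _ (abs_nonneg x)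
          rw [div_le_one hsy]; exact hylt
      _ = |x| := mul_one _
  have h2 : |x| - δ ≤ x * (x / Real.sqrt (x ^ 2 + δ ^ 2)) := by
    have hx2 : x * (x / Real.sqrt (x ^ 2 + δ ^ 2)) = x ^ 2 / Real.sqrt (x ^ 2 + δ ^ 2) := by
      ring
    rw [hx2, le_div_iff₀ hsx]
    nlinarith [sq_abs x, abs_nonneg x]
  linarith

lemma sum_shift {N : ℕ} [NeZero N] (F : ZMod N → ℝ) : ∑ j : ZMod N, F (j + 1) = ∑ j, F j :=
  Fintype.sum_equiv (Equiv.addRight 1) _ _ (fun _ => rfl)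

set_option maxHeartbeats 1000000 in
lemma key_rep {N : ℕ} [NeZero N] (Δx θ : ℝ) (hΔx : 0 < Δx) (hθ1 : 1 ≤ θ) (hθ2 : θ ≤ 2)
    (f : ℝ → ℝ) (hf : ContDiff ℝ 1 f) (I : ZMod N) (u av : ZMod N → ℝ)
    (R A Mf : ℝ)
    (hu : ∀ j, |u j| ≤ R) (hav : ∀ j, av j ≤ A)
    (hMf : ∀ x, |x| ≤ 3 * R → |deriv f x| ≤ Mf)
    (haB : ∀ (j : ZMod N) (ξ : ℝ), min (vminus N Δx θ I u j) (vplus N Δx θ I u j) ≤ ξ →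
      ξ ≤ max (vminus N Δx θ I u j) (vplus N Δx θ I u j) → |deriv f ξ| ≤ av j)
    (j : ZMod N) :
    ∃ C D : ℝ, 0 ≤ C ∧ C ≤ (3 * A + 2 * Mf) / Δx ∧ 0 ≤ D ∧ D ≤ (3 * A + 2 * Mf) / Δx ∧
      -(Hflux N Δx θ I f av u j - Hflux N Δx θ I f av u (j - 1)) / Δx
        = C * (u (j + 1) - u j) - D * (u j - u (j - 1)) := by
  -- abbreviations
  have hj1 : (j + 1 : ZMod N) - 1 = j := by ring
  have hj2 : (j - 1 : ZMod N) + 1 = j := by ring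
  -- slope representations
  obtain ⟨_, β, _, _, hβ0, hβ1, _, hsβ⟩ := slope_rep Δx θ hΔx hθ1 hθ2 I u (j + 1)
  obtain ⟨α, γ, hα0, hα1, hγ0, hγ1, hsα, hsγ⟩ := slope_rep Δx θ hΔx hθ1 hθ2 I u j
  obtain ⟨α', _, hα'0, hα'1, _, _, hsα', _⟩ := slope_rep Δx θ hΔx hθ1 hθ2 I u (j - 1)
  rw [hj1] at hsβ
  rw [hj2] at hsα'
  -- structural equations for reconstructed values
  have hPjeq : vplus N Δx θ I u j = u (j + 1) - β * (u (j + 1) - u j) := by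
    rw [vplus, hsβ]
  have hMjeq : vminus N Δx θ I u j = u j + α * (u (j + 1) - u j) := by
    rw [vminus, hsα]
  have hPmeq : vplus N Δx θ I u (j - 1) = u j - γ * (u j - u (j - 1)) := by
    rw [vplus, hj2, hsγ]
  have hMmeq : vminus N Δx θ I u (j - 1) = u (j - 1) + α' * (u j - u (j - 1)) := by
    rw [vminus, hsα']
  have hαγ : α * (u (j + 1) - u j) = γ * (u j - u (j - 1)) := by
    rw [← hsα, ← hsγ]
  -- mean value theorem instances
  obtain ⟨ξ1, hξ1a, hξ1b, he1⟩ := mvt_abs f hf (vminus N Δx θ I u j) (vplus N Δx θ I u j)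
  obtain ⟨ξ2, hξ2a, hξ2b, he2⟩ :=
    mvt_abs f hf (vminus N Δx θ I u (j - 1)) (vplus N Δx θ I u (j - 1))
  obtain ⟨ξ3, hξ3a, hξ3b, he3⟩ :=
    mvt_abs f hf (vplus N Δx θ I u (j - 1)) (vminus N Δx θ I u j)
  have hc1 : |deriv f ξ1| ≤ av j := haB j ξ1 hξ1a hξ1b
  have hc2 : |deriv f ξ2| ≤ av (j - 1) := haB (j - 1) ξ2 hξ2a hξ2b
  -- bound on ξ3
  have hR0 : 0 ≤ R := le_trans (abs_nonneg _) (hu j)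
  have hWb : |u (j + 1) - u j| ≤ 2 * R := by
    calc |u (j + 1) - u j| ≤ |u (j + 1)| + |u j| := abs_sub _ _
      _ ≤ 2 * R := by linarith [hu (j + 1), hu j]
  have hW'b : |u j - u (j - 1)| ≤ 2 * R := by
    calc |u j - u (j - 1)| ≤ |u j| + |u (j - 1)| := abs_sub _ _
      _ ≤ 2 * R := by linarith [hu j, hu (j - 1)]
  have hMjb : |vminus N Δx θ I u j| ≤ 3 * R := by
    rw [hMjeq]
    calc |u j + α * (u (j + 1) - u j)| ≤ |u j| + |α| * |u (j + 1) - u j| := by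
          rw [← abs_mul]; exact abs_add_le _ _
      _ ≤ R + 1 * (2 * R) := by
          have : |α| = α := abs_of_nonneg hα0
          rw [this]
          gcongr
          · exact hu j
          all_goals first | exact hα1 | exact hWb | rfl
      _ = 3 * R := by ring
  have hPmb : |vplus N Δx θ I u (j - 1)| ≤ 3 * R := by
    rw [hPmeq]
    calc |u j - γ * (u j - u (j - 1))| ≤ |u j| + |γ| * |u j - u (j - 1)| := by
          rw [← abs_mul]; exact abs_sub _ _
      _ ≤ R + 1 * (2 * R) := by
          rw [abs_of_nonneg hγ0]
          gcongr
          · exact hu j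
          all_goals first | exact hγ1 | exact hW'b | rfl
      _ = 3 * R := by ring
  have hξ3bd : |ξ3| ≤ 3 * R := by
    rw [abs_le]
    constructor
    · calc -(3 * R) ≤ min (vplus N Δx θ I u (j - 1)) (vminus N Δx θ I u j) := by
            rw [le_min_iff]
            exact ⟨(abs_le.1 hPmb).1, (abs_le.1 hMjb).1⟩
        _ ≤ ξ3 := hξ3a
    · calc ξ3 ≤ max (vplus N Δx θ I u (j - 1)) (vminus N Δx θ I u j) := hξ3b
        _ ≤ 3 * R := max_le (abs_le.1 hPmb).2 (abs_le.1 hMjb).2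
  have hc3 : |deriv f ξ3| ≤ Mf := hMf ξ3 hξ3bd
  -- names
  set d1 := deriv f ξ1 with hd1
  set d2 := deriv f ξ2 with hd2
  set d3 := deriv f ξ3 with hd3
  have hA0 : 0 ≤ A := le_trans (le_trans (abs_nonneg _) hc1) (hav j)
  have hMf0 : 0 ≤ Mf := le_trans (abs_nonneg _) hc3
  set Kc := (av j - d1) / 2 with hKc
  set Lc := (av (j - 1) + d2) / 2 with hLc
  set cc := Kc + Lc + |d3| with hcc
  set C0 := Kc * (1 - α - β) + (cc - d3) * α with hC0
  set D0 := Lc * (1 - γ - α') + (cc + d3) * γ with hD0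
  have habs1 := abs_le.1 hc1
  have habs2 := abs_le.1 hc2
  have habs3 := abs_le.1 hc3
  have hd3abs : -|d3| ≤ d3 ∧ d3 ≤ |d3| := ⟨neg_abs_le _, le_abs_self _⟩
  have hKc0 : 0 ≤ Kc := by rw [hKc]; linarith [habs1.2]
  have hLc0 : 0 ≤ Lc := by rw [hLc]; linarith [habs2.1]
  have hKcA : Kc ≤ A := by
    rw [hKc]
    have := hav j
    linarith [habs1.1]
  have hLcA : Lc ≤ A := by
    rw [hLc]
    have := hav (j - 1)
    linarith [habs2.2]
  have hC0nn : 0 ≤ C0 := by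
    rw [hC0, hcc]
    have t1 : 0 ≤ Kc * (1 - β) := mul_nonneg hKc0 (by linarith)
    have t2 : 0 ≤ (Lc + |d3| - d3) * α :=
      mul_nonneg (by linarith [hd3abs.2]) hα0
    linarith [t1, t2]
  have hD0nn : 0 ≤ D0 := by
    rw [hD0, hcc]
    have t1 : 0 ≤ Lc * (1 - α') := mul_nonneg hLc0 (by linarith)
    have t2 : 0 ≤ (Kc + |d3| + d3) * γ :=
      mul_nonneg (by linarith [hd3abs.1]) hγ0
    linarith [t1, t2]
  have hC0ub : C0 ≤ 3 * A + 2 * Mf := by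
    rw [hC0, hcc]
    have h1 : Kc * (1 - α - β) ≤ Kc :=
      by linarith [mul_nonneg hKc0 (show (0:ℝ) ≤ α + β by linarith)]
    have h2 : (Kc + Lc + |d3| - d3) * α ≤ Kc + Lc + |d3| - d3 := by
      linarith [mul_nonneg (show (0:ℝ) ≤ Kc + Lc + |d3| - d3 by linarith [hd3abs.2])
        (show (0:ℝ) ≤ 1 - α by linarith)]
    have h3 : |d3| ≤ Mf := hc3
    linarith [hd3abs.1, h1, h2, h3, hKcA, hLcA]
  have hD0ub : D0 ≤ 3 * A + 2 * Mf := by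
    rw [hD0, hcc]
    have h1 : Lc * (1 - γ - α') ≤ Lc :=
      by linarith [mul_nonneg hLc0 (show (0:ℝ) ≤ γ + α' by linarith)]
    have h2 : (Kc + Lc + |d3| + d3) * γ ≤ Kc + Lc + |d3| + d3 := by
      linarith [mul_nonneg (show (0:ℝ) ≤ Kc + Lc + |d3| + d3 by linarith [hd3abs.1])
        (show (0:ℝ) ≤ 1 - γ by linarith)]
    have h3 : |d3| ≤ Mf := hc3
    linarith [hd3abs.2, h1, h2, h3, hKcA, hLcA]
  refine ⟨C0 / Δx, D0 / Δx, by positivity, by gcongr, by positivity, by gcongr, ?_⟩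
  -- the flux identity
  have hmain : -(Hflux N Δx θ I f av u j - Hflux N Δx θ I f av u (j - 1))
      = C0 * (u (j + 1) - u j) - D0 * (u j - u (j - 1)) := by
    unfold Hflux
    rw [hC0, hD0, hcc, hKc, hLc]
    simp only [hPjeq, hMjeq, hPmeq, hMmeq] at he1 he2 he3 ⊢
    linear_combination (-(1:ℝ)/2) * he1 - (1/2 : ℝ) * he2 - he3
      - (Kc + Lc + |d3|) * hαγ
  rw [hmain]
  field_simp

lemma sum_bound {N : ℕ} [NeZero N] (W C D : ZMod N → ℝ) (Bc δ : ℝ) (hδ : 0 < δ)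
    (hBc : 0 ≤ Bc)
    (hC0 : ∀ j, 0 ≤ C j) (hC1 : ∀ j, C j ≤ Bc) (hD0 : ∀ j, 0 ≤ D j) (hD1 : ∀ j, D j ≤ Bc) :
    ∑ j : ZMod N, (W j / Real.sqrt ((W j) ^ 2 + δ ^ 2)) *
        ((C (j + 1) * W (j + 1) - D (j + 1) * W j) - (C j * W j - D j * W (j - 1)))
      ≤ δ * (2 * N * Bc) := by
  set φ : ZMod N → ℝ := fun j => W j / Real.sqrt ((W j) ^ 2 + δ ^ 2) with hφ
  have split : ∀ j : ZMod N,
      φ j * ((C (j + 1) * W (j + 1) - D (j + 1) * W j) - (C j * W j - D j * W (j - 1)))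
      = (φ j * (C (j + 1) * W (j + 1)) - φ j * (C j * W j))
        + (φ j * (D j * W (j - 1)) - φ j * (D (j + 1) * W j)) := by
    intro j; ring
  rw [Finset.sum_congr rfl (fun j _ => split j), Finset.sum_add_distrib]
  have shift1 : ∑ j : ZMod N, φ j * (C (j + 1) * W (j + 1))
      = ∑ j : ZMod N, φ (j - 1) * (C j * W j) := by
    rw [← sum_shift (fun j => φ (j - 1) * (C j * W j))]
    simp
  have shift2 : ∑ j : ZMod N, φ j * (D (j + 1) * W j)
      = ∑ j : ZMod N, φ (j - 1) * (D j * W (j - 1)) := by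
    rw [← sum_shift (fun j => φ (j - 1) * (D j * W (j - 1)))]
    simp
  have b1 : ∑ j : ZMod N, (φ j * (C (j + 1) * W (j + 1)) - φ j * (C j * W j)) ≤ δ * (N * Bc) := by
    rw [Finset.sum_sub_distrib, shift1, ← Finset.sum_sub_distrib]
    have : ∀ j : ZMod N, φ (j - 1) * (C j * W j) - φ j * (C j * W j) ≤ Bc * δ := by
      intro j
      have h := phi_ineq δ (W j) (W (j - 1)) hδ
      have : φ (j - 1) * (C j * W j) - φ j * (C j * W j)
          = C j * (W j * φ (j - 1) - W j * φ j) := by ring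
      rw [this]
      calc C j * (W j * φ (j - 1) - W j * φ j) ≤ C j * δ := by
            apply mul_le_mul_of_nonneg_left _ (hC0 j)
            simpa [hφ] using h
        _ ≤ Bc * δ := mul_le_mul_of_nonneg_right (hC1 j) hδ.le
    calc ∑ j : ZMod N, (φ (j - 1) * (C j * W j) - φ j * (C j * W j))
        ≤ ∑ _j : ZMod N, Bc * δ := Finset.sum_le_sum (fun j _ => this j)
      _ = N * (Bc * δ) := by
          rw [Finset.sum_const, Finset.card_univ, ZMod.card, nsmul_eq_mul]
      _ = δ * (N * Bc) := by ring
  have b2 : ∑ j : ZMod N, (φ j * (D j * W (j - 1)) - φ j * (D (j + 1) * W j)) ≤ δ * (N * Bc) := by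
    rw [Finset.sum_sub_distrib, shift2, ← Finset.sum_sub_distrib]
    have : ∀ j : ZMod N, φ j * (D j * W (j - 1)) - φ (j - 1) * (D j * W (j - 1)) ≤ Bc * δ := by
      intro j
      have h := phi_ineq δ (W (j - 1)) (W j) hδ
      have heq : φ j * (D j * W (j - 1)) - φ (j - 1) * (D j * W (j - 1))
          = D j * (W (j - 1) * φ j - W (j - 1) * φ (j - 1)) := by ring
      rw [heq]
      calc D j * (W (j - 1) * φ j - W (j - 1) * φ (j - 1)) ≤ D j * δ := by
            apply mul_le_mul_of_nonneg_left _ (hD0 j)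
            simpa [hφ] using h
        _ ≤ Bc * δ := mul_le_mul_of_nonneg_right (hD1 j) hδ.le
    calc ∑ j : ZMod N, (φ j * (D j * W (j - 1)) - φ (j - 1) * (D j * W (j - 1)))
        ≤ ∑ _j : ZMod N, Bc * δ := Finset.sum_le_sum (fun j _ => this j)
      _ = N * (Bc * δ) := by
          rw [Finset.sum_const, Finset.card_univ, ZMod.card, nsmul_eq_mul]
      _ = δ * (N * Bc) := by ring
  calc _ ≤ δ * (N * Bc) + δ * (N * Bc) := add_le_add b1 b2
    _ = δ * (2 * N * Bc) := by ring

lemma abs_le_sqrt_sq_add (x δ : ℝ) : |x| ≤ Real.sqrt (x ^ 2 + δ ^ 2) := by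
  rw [← Real.sqrt_sq_eq_abs]
  exact Real.sqrt_le_sqrt (by nlinarith)

lemma sqrt_sq_add_le (x δ : ℝ) (hδ : 0 ≤ δ) : Real.sqrt (x ^ 2 + δ ^ 2) ≤ |x| + δ := by
  have h : Real.sqrt (x ^ 2 + δ ^ 2) ≤ Real.sqrt ((|x| + δ) ^ 2) :=
    Real.sqrt_le_sqrt (by nlinarith [abs_nonneg x, sq_abs x])
  rwa [Real.sqrt_sq (by positivity)] at h


set_option maxHeartbeats 1000000 in
/-- TVD property of the Kurganov–Tadmor interface scheme: with minmod slopes away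
from the interface index `I` and zero ktSlope at `I`, local speeds dominating `|f′|`
between the reconstructed interface values, any solution of the semi-discrete
scheme `d vⱼ/dt = −(H_{j+1/2} − H_{j−1/2})/Δx` has nonincreasing total variation
`Σⱼ |v_{j+1}(t) − vⱼ(t)|`. -/
theorem KT_interface_TVD (N : ℕ) [NeZero N] (hN : 3 ≤ N)
    (Δx θ : ℝ) (hΔx : 0 < Δx) (hθ : θ ∈ Set.Icc (1 : ℝ) 2)
    (f : ℝ → ℝ) (hf : ContDiff ℝ 1 f) (I : ZMod N)
    (v a : ℝ → ZMod N → ℝ)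
    (hv : ∀ j : ZMod N, Differentiable ℝ (fun t => v t j))
    (hacont : ∀ j : ZMod N, Continuous (fun t => a t j))
    (haBound : ∀ (t : ℝ) (j : ZMod N) (ξ : ℝ),
      min (vminus N Δx θ I (v t) j) (vplus N Δx θ I (v t) j) ≤ ξ →
      ξ ≤ max (vminus N Δx θ I (v t) j) (vplus N Δx θ I (v t) j) →
      |deriv f ξ| ≤ a t j)
    (hode : ∀ (t : ℝ) (j : ZMod N),
      HasDerivAt (fun s => v s j)
        (-(Hflux N Δx θ I f (a t) (v t) j -
            Hflux N Δx θ I f (a t) (v t) (j - 1)) / Δx) t) :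
    Antitone (fun t => ∑ j : ZMod N, |v t (j + 1) - v t j|) := by
  intro t1 t2 h12
  simp only
  -- bounds on the compact interval
  have hvc : ∀ j : ZMod N, Continuous fun t => v t j := fun j => (hv j).continuous
  obtain ⟨R, hR⟩ : ∃ R, ∀ t ∈ Icc t1 t2, ∀ j : ZMod N, |v t j| ≤ R := by
    have hbd : ∀ j : ZMod N, ∃ Rj, ∀ t ∈ Icc t1 t2, |v t j| ≤ Rj := by
      intro j
      obtain ⟨Rj, hRj⟩ := (isCompact_Icc (a := t1) (b := t2)).exists_bound_of_continuousOn
        (hvc j).continuousOn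
      exact ⟨Rj, fun t ht => by simpa using hRj t ht⟩
    choose Rf hRf using hbd
    refine ⟨∑ j : ZMod N, |Rf j|, fun t ht j => ?_⟩
    calc |v t j| ≤ Rf j := hRf j t ht
      _ ≤ |Rf j| := le_abs_self _
      _ ≤ ∑ i : ZMod N, |Rf i| :=
          Finset.single_le_sum (fun i _ => abs_nonneg (Rf i)) (Finset.mem_univ j)
  obtain ⟨A, hA⟩ : ∃ A, ∀ t ∈ Icc t1 t2, ∀ j : ZMod N, a t j ≤ A := by
    have hbd : ∀ j : ZMod N, ∃ Aj, ∀ t ∈ Icc t1 t2, a t j ≤ Aj := by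
      intro j
      obtain ⟨Aj, hAj⟩ := (isCompact_Icc (a := t1) (b := t2)).exists_bound_of_continuousOn
        (hacont j).continuousOn
      exact ⟨Aj, fun t ht => le_trans (le_abs_self _) (by simpa using hAj t ht)⟩
    choose Af hAf using hbd
    refine ⟨∑ j : ZMod N, |Af j|, fun t ht j => ?_⟩
    calc a t j ≤ Af j := hAf j t ht
      _ ≤ |Af j| := le_abs_self _
      _ ≤ ∑ i : ZMod N, |Af i| :=
          Finset.single_le_sum (fun i _ => abs_nonneg (Af i)) (Finset.mem_univ j)
  obtain ⟨Mf, hMf⟩ : ∃ Mf, ∀ x, |x| ≤ 3 * R → |deriv f x| ≤ Mf := by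
    obtain ⟨Mf, hMf⟩ := (isCompact_Icc (a := -(3 * R)) (b := 3 * R)).exists_bound_of_continuousOn
      (hf.continuous_deriv le_rfl).continuousOn
    exact ⟨Mf, fun x hx => by simpa using hMf x (abs_le.1 hx)⟩
  set Bc : ℝ := (3 * A + 2 * Mf) / Δx with hBcdef
  -- key representation
  have key : ∀ t ∈ Icc t1 t2, ∀ j : ZMod N,
      ∃ C D : ℝ, 0 ≤ C ∧ C ≤ Bc ∧ 0 ≤ D ∧ D ≤ Bc ∧
        -(Hflux N Δx θ I f (a t) (v t) j - Hflux N Δx θ I f (a t) (v t) (j - 1)) / Δx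
          = C * (v t (j + 1) - v t j) - D * (v t j - v t (j - 1)) := by
    intro t ht j
    exact key_rep Δx θ hΔx hθ.1 hθ.2 f hf I (v t) (a t) R A Mf
      (fun i => hR t ht i) (fun i => hA t ht i) hMf (fun i ξ h1 h2 => haBound t i ξ h1 h2) j
  have hBc0 : 0 ≤ Bc := by
    obtain ⟨C, D, hC0, hC1, _, _, _⟩ := key t1 (left_mem_Icc.2 h12) 0
    exact le_trans hC0 hC1
  set K : ℝ := 2 * (N : ℝ) * Bc with hKdef
  have hK0 : 0 ≤ K := by positivity
  refine le_of_forall_pos_le_add fun ε hε => ?_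
  set δ : ℝ := ε / ((N : ℝ) + K * (t2 - t1) + 1) with hδdef
  have hden : 0 < (N : ℝ) + K * (t2 - t1) + 1 := by
    have : 0 ≤ K * (t2 - t1) := mul_nonneg hK0 (by linarith)
    positivity
  have hδ : 0 < δ := div_pos hε hden
  -- the mollified total variation
  set gE : ℝ → ℝ := fun s => ∑ j : ZMod N, Real.sqrt ((v s (j + 1) - v s j) ^ 2 + δ ^ 2)
    with hgEdef
  have hwd : ∀ (j : ZMod N) (t : ℝ), HasDerivAt (fun s => v s (j + 1) - v s j)
      ((-(Hflux N Δx θ I f (a t) (v t) (j + 1) - Hflux N Δx θ I f (a t) (v t) (j + 1 - 1)) / Δx)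
        - (-(Hflux N Δx θ I f (a t) (v t) j - Hflux N Δx θ I f (a t) (v t) (j - 1)) / Δx)) t :=
    fun j t => (hode t (j + 1)).sub (hode t j)
  have hgE : ∀ t : ℝ, HasDerivAt gE (∑ j : ZMod N,
      (v t (j + 1) - v t j) / Real.sqrt ((v t (j + 1) - v t j) ^ 2 + δ ^ 2) *
        ((-(Hflux N Δx θ I f (a t) (v t) (j + 1) - Hflux N Δx θ I f (a t) (v t) (j + 1 - 1)) / Δx)
          - (-(Hflux N Δx θ I f (a t) (v t) j - Hflux N Δx θ I f (a t) (v t) (j - 1)) / Δx))) t := by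
    intro t
    apply HasDerivAt.fun_sum
    intro j _
    have hpos : 0 < (v t (j + 1) - v t j) ^ 2 + δ ^ 2 := by positivity
    have hin : HasDerivAt (fun s => (v s (j + 1) - v s j) ^ 2 + δ ^ 2)
        ((2 : ℕ) * (v t (j + 1) - v t j) ^ 1 *
          ((-(Hflux N Δx θ I f (a t) (v t) (j + 1) - Hflux N Δx θ I f (a t) (v t) (j + 1 - 1)) / Δx)
            - (-(Hflux N Δx θ I f (a t) (v t) j - Hflux N Δx θ I f (a t) (v t) (j - 1)) / Δx))) t :=
      ((hwd j t).pow 2).add_const (δ ^ 2)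
    have hsq := (Real.hasDerivAt_sqrt (ne_of_gt hpos)).comp t hin
    have hsrt : 0 < Real.sqrt ((v t (j + 1) - v t j) ^ 2 + δ ^ 2) := Real.sqrt_pos.2 hpos
    refine hsq.congr_deriv ?_
    field_simp
    ring
  -- derivative bound on the open interval
  have hderiv_le : ∀ t ∈ Ioo t1 t2, deriv gE t ≤ δ * K := by
    intro t ht
    have htm : t ∈ Icc t1 t2 := Ioo_subset_Icc_self ht
    choose Cf Df hC0 hC1 hD0 hD1 heq using fun j => key t htm j
    rw [(hgE t).deriv]
    set W : ZMod N → ℝ := fun i => v t (i + 1) - v t i with hW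
    have hre : ∀ j : ZMod N,
        (v t (j + 1) - v t j) / Real.sqrt ((v t (j + 1) - v t j) ^ 2 + δ ^ 2) *
          ((-(Hflux N Δx θ I f (a t) (v t) (j + 1) - Hflux N Δx θ I f (a t) (v t) (j + 1 - 1)) / Δx)
            - (-(Hflux N Δx θ I f (a t) (v t) j - Hflux N Δx θ I f (a t) (v t) (j - 1)) / Δx))
        = W j / Real.sqrt (W j ^ 2 + δ ^ 2) *
            ((Cf (j + 1) * W (j + 1) - Df (j + 1) * W j) - (Cf j * W j - Df j * W (j - 1))) := by
      intro j
      have e1 := heq (j + 1)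
      have e2 := heq j
      rw [e1, e2, hW]
      simp only
      rw [show (j : ZMod N) + 1 - 1 = j from by ring, show (j : ZMod N) - 1 + 1 = j from by ring]
    calc (∑ j : ZMod N,
        (v t (j + 1) - v t j) / Real.sqrt ((v t (j + 1) - v t j) ^ 2 + δ ^ 2) *
          ((-(Hflux N Δx θ I f (a t) (v t) (j + 1) - Hflux N Δx θ I f (a t) (v t) (j + 1 - 1)) / Δx)
            - (-(Hflux N Δx θ I f (a t) (v t) j - Hflux N Δx θ I f (a t) (v t) (j - 1)) / Δx)))
        = ∑ j : ZMod N, W j / Real.sqrt (W j ^ 2 + δ ^ 2) *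
            ((Cf (j + 1) * W (j + 1) - Df (j + 1) * W j) - (Cf j * W j - Df j * W (j - 1))) :=
          Finset.sum_congr rfl (fun j _ => hre j)
      _ ≤ δ * (2 * N * Bc) := sum_bound W Cf Df Bc δ hδ hBc0 hC0 hC1 hD0 hD1
      _ = δ * K := by rw [hKdef]
  -- monotonicity of the mollified TV
  have hgEdiff : Differentiable ℝ gE := fun t => (hgE t).differentiableAt
  have hFd : ∀ x : ℝ, HasDerivAt (fun t => gE t - δ * K * t) (deriv gE x - δ * K) x := by
    intro x
    have h1 : HasDerivAt (fun t : ℝ => δ * K * t) (δ * K) x := by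
      simpa using (hasDerivAt_id x).const_mul (δ * K)
    exact ((hgEdiff x).hasDerivAt).sub h1
  have hFmono : gE t2 - δ * K * t2 ≤ gE t1 - δ * K * t1 := by
    have hF : AntitoneOn (fun t => gE t - δ * K * t) (Icc t1 t2) := by
      apply antitoneOn_of_deriv_nonpos (convex_Icc t1 t2)
      · exact (hgEdiff.continuous.sub (by continuity)).continuousOn
      · exact fun x _ => ((hFd x).differentiableAt).differentiableWithinAt
      · intro x hx
        rw [interior_Icc] at hx
        rw [(hFd x).deriv]
        linarith [hderiv_le x hx]
    exact hF (left_mem_Icc.2 h12) (right_mem_Icc.2 h12) h12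
  -- comparison between g and gE
  have hlow : (∑ j : ZMod N, |v t2 (j + 1) - v t2 j|) ≤ gE t2 := by
    apply Finset.sum_le_sum
    intro j _
    exact abs_le_sqrt_sq_add _ _
  have hupp : gE t1 ≤ (∑ j : ZMod N, |v t1 (j + 1) - v t1 j|) + (N : ℝ) * δ := by
    calc gE t1 ≤ ∑ j : ZMod N, (|v t1 (j + 1) - v t1 j| + δ) :=
          Finset.sum_le_sum (fun j _ => sqrt_sq_add_le _ _ hδ.le)
      _ = (∑ j : ZMod N, |v t1 (j + 1) - v t1 j|) + (N : ℝ) * δ := by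
          rw [Finset.sum_add_distrib, Finset.sum_const, Finset.card_univ, ZMod.card,
            nsmul_eq_mul]
  have hfinal : δ * ((N : ℝ) + K * (t2 - t1)) ≤ ε := by
    rw [hδdef, div_mul_eq_mul_div, div_le_iff₀ hden]
    have hX : 0 ≤ (N : ℝ) + K * (t2 - t1) := by
      have : 0 ≤ K * (t2 - t1) := mul_nonneg hK0 (by linarith)
      positivity
    nlinarith
  linarith [hlow, hupp, hFmono, hfinal]
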